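/- If G is a topological groupoid, then the unit space G⁽⁰⁾ is closed in G if and only if G is Hausdorff. -/

import Mathlib

/-- A groupoid in the sense of Renault/Hahn: a set `G` with a set of composable
pairs (encoded by the relation `Comp`), a multiplication defined on composable pairs
(encoded by a total function `mul` whose values on non-composable pairs are irrelevant),
and an inversion `inv`. -/
structure RGroupoid (G : Type*) where
  /-- `Comp α β` means `(α, β) ∈ G⁽²⁾`. -/
  Comp : G → G → Prop
  /-- the multiplication map -/
  mul : G → G → G
  /-- the inversion map -/
  inv : G → G
  inv_inv : ∀ γ, inv (inv γ) = γ
  comp_mul_left : ∀ {α β γ}, Comp α β → Comp β γ → Comp (mul α β) γ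
  comp_mul_right : ∀ {α β γ}, Comp α β → Comp β γ → Comp α (mul β γ)
  mul_assoc : ∀ {α β γ}, Comp α β → Comp β γ → mul (mul α β) γ = mul α (mul β γ)
  comp_inv : ∀ γ, Comp γ (inv γ)
  inv_mul_cancel : ∀ {γ η}, Comp γ η → mul (inv γ) (mul γ η) = η
  mul_inv_cancel : ∀ {γ η}, Comp γ η → mul (mul γ η) (inv η) = γ

namespace RGroupoid

variable {G : Type*} (S : RGroupoid G)

/-- The range map `r(γ) = γγ⁻¹`. -/
def r (γ : G) : G := S.mul γ (S.inv γ)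

/-- The source map `s(γ) = γ⁻¹γ`. -/
def s (γ : G) : G := S.mul (S.inv γ) γ

/-- The unit space `G⁽⁰⁾ = {γ⁻¹γ : γ ∈ G}`. -/
def units : Set G := {x | ∃ γ, S.s γ = x}

end RGroupoid

/-- A topological groupoid: a groupoid with a locally compact topology for which the unit
space is Hausdorff in the relative topology, r, s and inversion are continuous, and
multiplication is continuous on the set of composable pairs with the relative topology. -/
structure IsTopGroupoid {G : Type*} [TopologicalSpace G] (S : RGroupoid G) : Prop where
  locallyCompact : LocallyCompactSpace G
  t2_units : T2Space S.units
  continuous_r : Continuous S.r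
  continuous_s : Continuous S.s
  continuous_inv : Continuous S.inv
  continuous_mul : Continuous fun p : {p : G × G // S.Comp p.1 p.2} => S.mul p.1.1 p.1.2

namespace RGroupoid

variable {G : Type*} (S : RGroupoid G)

lemma comp_inv' (γ : G) : S.Comp (S.inv γ) γ := by
  have := S.comp_inv (S.inv γ); rwa [S.inv_inv] at this

lemma mul_s (γ : G) : S.mul γ (S.s γ) = γ := by
  have := S.inv_mul_cancel (S.comp_inv' γ)
  rwa [S.inv_inv] at this

lemma comp_s (γ : G) : S.Comp γ (S.s γ) :=
  S.comp_mul_right (S.comp_inv γ) (S.comp_inv' γ)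

lemma comp_r (γ : G) : S.Comp (S.r γ) γ :=
  S.comp_mul_left (S.comp_inv γ) (S.comp_inv' γ)

lemma comp_of_eq {γ η : G} (h : S.s γ = S.r η) : S.Comp γ η := by
  have h1 : S.Comp γ (S.r η) := h ▸ S.comp_s γ
  have h2 := S.comp_mul_left h1 (S.comp_r η)
  rwa [← h, S.mul_s] at h2

lemma s_inv (γ : G) : S.s (S.inv γ) = S.r γ := by
  unfold s r; rw [S.inv_inv]

lemma comp_s_inv (γ : G) : S.Comp (S.s γ) (S.inv γ) :=
  S.comp_mul_left (S.comp_inv' γ) (S.comp_inv γ)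

lemma comp_s_s (γ : G) : S.Comp (S.s γ) (S.s γ) :=
  S.comp_mul_right (S.comp_s_inv γ) (S.comp_inv' γ)

lemma s_mul_s (γ : G) : S.mul (S.s γ) (S.s γ) = S.s γ := by
  have h := S.mul_assoc (S.comp_inv' γ) (S.comp_s γ)
  rw [S.mul_s] at h
  simpa [RGroupoid.s] using h

lemma s_s (γ : G) : S.s (S.s γ) = S.s γ := by
  have h := S.inv_mul_cancel (S.comp_s_s γ)
  rw [S.s_mul_s] at h
  exact h

lemma mem_units_iff {x : G} : x ∈ S.units ↔ S.s x = x := by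
  constructor
  · rintro ⟨γ, rfl⟩; exact S.s_s γ
  · intro h; exact ⟨x, h⟩

end RGroupoid

open Topology in
/-- In a topological groupoid, the unit space is closed iff the groupoid is Hausdorff. -/
theorem units_closed_iff_t2 {G : Type*} [TopologicalSpace G] (S : RGroupoid G)
    (hS : IsTopGroupoid S) :
    IsClosed S.units ↔ T2Space G := by
  constructor
  · intro hcl
    rw [t2_iff_nhds]
    intro α β hF
    haveI := hF
    set F := 𝓝 α ⊓ 𝓝 β with hFdef
    have hFa : F ≤ 𝓝 α := inf_le_left
    have hFb : F ≤ 𝓝 β := inf_le_right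
    -- limits in the (Hausdorff, closed) unit space are unique
    have key : ∀ (L : Filter G) (x y : G), L.NeBot → L ≤ Filter.principal S.units →
        L ≤ 𝓝 x → L ≤ 𝓝 y → x ∈ S.units → y ∈ S.units → x = y := by
      intro L x y hL hLu hLx hLy hx hy
      haveI := hS.t2_units
      have hne : (Filter.comap (Subtype.val : S.units → G) L).NeBot := by
        rw [Filter.comap_neBot_iff]
        intro t ht
        have hmem : t ∩ S.units ∈ L :=
          Filter.inter_mem ht (hLu (Filter.mem_principal_self _))
        obtain ⟨z, hz1, hz2⟩ := hL.nonempty_of_mem hmem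
        exact ⟨⟨z, hz2⟩, hz1⟩
      have h1 : Filter.comap Subtype.val L ≤ 𝓝 (⟨x, hx⟩ : S.units) := by
        rw [nhds_induced]; exact Filter.comap_mono hLx
      have h2 : Filter.comap Subtype.val L ≤ 𝓝 (⟨y, hy⟩ : S.units) := by
        rw [nhds_induced]; exact Filter.comap_mono hLy
      have heq : (⟨x, hx⟩ : S.units) = ⟨y, hy⟩ :=
        eq_of_nhds_neBot (Filter.neBot_of_le (le_inf h1 h2))
      exact congrArg Subtype.val heq
    -- range/source values lie in the unit space
    have hr_mem : ∀ γ : G, S.r γ ∈ S.units := fun γ => ⟨S.inv γ, S.s_inv γ⟩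
    have hs_mem : ∀ γ : G, S.s γ ∈ S.units := fun γ => ⟨γ, rfl⟩
    -- step 1 : r α = r β
    have hrF : Filter.map S.r F ≤ Filter.principal S.units := by
      rw [Filter.le_principal_iff]
      exact Filter.mem_map.mpr (Filter.univ_mem' fun γ => hr_mem γ)
    have hra : Filter.map S.r F ≤ 𝓝 (S.r α) := (hS.continuous_r.tendsto α).mono_left hFa
    have hrb : Filter.map S.r F ≤ 𝓝 (S.r β) := (hS.continuous_r.tendsto β).mono_left hFb
    have hrab : S.r α = S.r β :=
      key (Filter.map S.r F) _ _ Filter.map_neBot hrF hra hrb (hr_mem α) (hr_mem β)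
    have hc : S.Comp (S.inv α) β := S.comp_of_eq (by rw [S.s_inv]; exact hrab)
    -- step 2 : s tends to mul (inv α) β along F
    have hts : Filter.Tendsto
        (fun γ => (⟨(S.inv γ, γ), S.comp_inv' γ⟩ : {p : G × G // S.Comp p.1 p.2})) F
        (𝓝 ⟨(S.inv α, β), hc⟩) := by
      rw [tendsto_subtype_rng]
      exact ((hS.continuous_inv.tendsto α).mono_left hFa).prodMk_nhds hFb
    have hmul : Filter.Tendsto S.s F (𝓝 (S.mul (S.inv α) β)) := by
      have h := (hS.continuous_mul.tendsto ⟨(S.inv α, β), hc⟩).comp hts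
      exact h
    have hsa : Filter.Tendsto S.s F (𝓝 (S.s α)) := (hS.continuous_s.tendsto α).mono_left hFa
    have hsF : Filter.map S.s F ≤ Filter.principal S.units := by
      rw [Filter.le_principal_iff]
      exact Filter.mem_map.mpr (Filter.univ_mem' fun γ => hs_mem γ)
    have hmem : S.mul (S.inv α) β ∈ S.units := by
      have := mem_closure_of_tendsto hmul (Filter.Eventually.of_forall fun γ => hs_mem γ)
      rwa [hcl.closure_eq] at this
    have hkey : S.s α = S.mul (S.inv α) β :=
      key (Filter.map S.s F) _ _ Filter.map_neBot hsF hsa hmul (hs_mem α) hmem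
    have hfin : S.mul α (S.s α) = S.mul α (S.mul (S.inv α) β) := by rw [hkey]
    rw [S.mul_s] at hfin
    have hb : S.mul α (S.mul (S.inv α) β) = β := by
      have := S.inv_mul_cancel hc
      rwa [S.inv_inv] at this
    rw [hb] at hfin
    exact hfin
  · intro ht
    have hset : S.units = {x | S.s x = x} := by
      ext x; exact S.mem_units_iff
    rw [hset]
    exact isClosed_eq hS.continuous_s continuous_id
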